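/- Let σ = (σ_j) be a stochastic process independent of an i.i.d. sequence Z = (Z_j), and let F^σ be the σ-algebra generated by the whole process σ. Let v_h(x) = (1/2π) ∫ (φ_w(s)/φ_k(s/h)) e^{−isx} ds where φ_k is the characteristic function of log Z_j² and φ_w is the (compactly supported, integrable) characteristic function of a kernel w. Then E[ v_h((x − log X_j²)/h) | F^σ ] = w((x − log σ_j²)/h) almost surely, where X_j = σ_j Z_j. -/

import Mathlib

open Real MeasureTheory ProbabilityTheory

/-! ### Auxiliary lemmas -/

lemma norm_exp_neg_I_mul (s r : ℝ) : ‖Complex.exp (-Complex.I * s * r)‖ = 1 := by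
  have : -Complex.I * (s : ℂ) * (r : ℂ) = ((-(s * r) : ℝ) : ℂ) * Complex.I := by
    push_cast; ring
  rw [this, Complex.norm_exp_ofReal_mul_I]

lemma norm_exp_I_mul (s r : ℝ) : ‖Complex.exp (Complex.I * s * r)‖ = 1 := by
  have : Complex.I * (s : ℂ) * (r : ℂ) = (((s * r) : ℝ) : ℂ) * Complex.I := by
    push_cast; ring
  rw [this, Complex.norm_exp_ofReal_mul_I]

/-- Continuity of a (scaled) inverse Fourier integral of an integrable function. -/
lemma continuous_fourier_repr (G : ℝ → ℂ) (hG : Integrable G) :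
    Continuous fun y : ℝ => ∫ s : ℝ, G s * Complex.exp (-Complex.I * s * y) := by
  refine continuous_of_dominated (bound := fun s => ‖G s‖) ?_ ?_ hG.norm ?_
  · intro y
    refine hG.aestronglyMeasurable.mul ?_
    refine (Complex.measurable_exp.comp ?_).aestronglyMeasurable
    exact (Complex.measurable_ofReal.const_mul (-Complex.I)).mul measurable_const
  · intro y
    filter_upwards with s
    rw [norm_mul, norm_exp_neg_I_mul, mul_one]
  · filter_upwards with s
    exact continuous_const.mul
      (Complex.continuous_exp.comp (continuous_const.mul Complex.continuous_ofReal))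

/-- A real function whose complexification is a scaled inverse Fourier integral of an
integrable function is continuous. -/
lemma continuous_of_fourier_repr (g : ℝ → ℝ) (G : ℝ → ℂ) (hG : Integrable G)
    (hg : ∀ y : ℝ, (g y : ℂ) =
      (1 / (2 * π) : ℝ) * ∫ s : ℝ, G s * Complex.exp (-Complex.I * s * y)) :
    Continuous g := by
  have h2 : Continuous fun y : ℝ =>
      (((1 / (2 * π) : ℝ) : ℂ) * ∫ s : ℝ, G s * Complex.exp (-Complex.I * s * y)).re :=
    Complex.continuous_re.comp (continuous_const.mul (continuous_fourier_repr G hG))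
  have : g = fun y : ℝ =>
      (((1 / (2 * π) : ℝ) : ℂ) * ∫ s : ℝ, G s * Complex.exp (-Complex.I * s * y)).re := by
    funext y
    rw [← hg y, Complex.ofReal_re]
  rw [this]; exact h2

/-- Uniform bound for such a function. -/
lemma abs_le_of_fourier_repr (g : ℝ → ℝ) (G : ℝ → ℂ)
    (hg : ∀ y : ℝ, (g y : ℂ) =
      (1 / (2 * π) : ℝ) * ∫ s : ℝ, G s * Complex.exp (-Complex.I * s * y)) (y : ℝ) :
    |g y| ≤ (1 / (2 * π)) * ∫ s : ℝ, ‖G s‖ := by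
  have h1 : |g y| = ‖((g y : ℝ) : ℂ)‖ := by
    rw [Complex.norm_real, Real.norm_eq_abs]
  have hπ : (0 : ℝ) ≤ 1 / (2 * π) := by positivity
  rw [h1, hg y, norm_mul, Complex.norm_real, Real.norm_eq_abs, abs_of_nonneg hπ]
  refine mul_le_mul_of_nonneg_left ?_ hπ
  refine (norm_integral_le_integral_norm _).trans (le_of_eq ?_)
  refine integral_congr_ae (Filter.Eventually.of_forall fun s => ?_)
  simp only [norm_mul, norm_exp_neg_I_mul, mul_one]

/-- The deconvolution identity: integrating the deconvolution kernel against the noise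
distribution recovers the kernel `w`. -/
lemma integral_vh_eq_w (φw φk : ℝ → ℂ) (w vh : ℝ → ℝ) (h : ℝ)
    (hφk_ne : ∀ t, φk t ≠ 0)
    (hvh_int : Integrable (fun s : ℝ => φw s / φk (s / h)))
    (hvh : ∀ x : ℝ, (vh x : ℂ) =
      (1 / (2 * π) : ℝ) * ∫ s : ℝ, φw s / φk (s / h) * Complex.exp (-Complex.I * s * x))
    (hw : ∀ y : ℝ, (w y : ℂ) =
      (1 / (2 * π) : ℝ) * ∫ s : ℝ, φw s * Complex.exp (-Complex.I * s * y))
    (μ : Measure ℝ) [IsProbabilityMeasure μ]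
    (hφk_char : ∀ t : ℝ, φk t = ∫ b, Complex.exp (Complex.I * t * Real.log (b ^ 2)) ∂μ)
    (c : ℝ) :
    ∫ b, vh (c - Real.log (b ^ 2) / h) ∂μ = w c := by
  -- measurability of the oscillating factor
  have hg_meas : Measurable fun p : ℝ × ℝ => c - Real.log (p.1 ^ 2) / h :=
    ((Real.measurable_log.comp (measurable_fst.pow_const 2)).div_const h).const_sub c
  have hmeasE : Measurable fun p : ℝ × ℝ =>
      Complex.exp (-Complex.I * p.2 * ((c - Real.log (p.1 ^ 2) / h : ℝ) : ℂ)) := by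
    refine Complex.measurable_exp.comp ?_
    exact ((Complex.measurable_ofReal.comp measurable_snd).const_mul (-Complex.I)).mul
      (Complex.measurable_ofReal.comp hg_meas)
  have hmeasE' : ∀ s : ℝ, Measurable fun b : ℝ =>
      Complex.exp (-Complex.I * s * ((c - Real.log (b ^ 2) / h : ℝ) : ℂ)) := by
    intro s
    refine Complex.measurable_exp.comp ?_
    exact measurable_const.mul (Complex.measurable_ofReal.comp
      (((Real.measurable_log.comp (measurable_id.pow_const 2)).div_const h).const_sub c))
  -- a.e. strong measurability on the product
  have hsm : AEStronglyMeasurable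
      (fun p : ℝ × ℝ => (φw p.2 / φk (p.2 / h)) *
        Complex.exp (-Complex.I * p.2 * ((c - Real.log (p.1 ^ 2) / h : ℝ) : ℂ)))
      (μ.prod volume) := by
    refine AEStronglyMeasurable.mul ?_ hmeasE.aestronglyMeasurable
    exact hvh_int.1.comp_quasiMeasurePreserving Measure.quasiMeasurePreserving_snd
  -- integrability on the product
  have hint_prod : Integrable
      (fun p : ℝ × ℝ => (φw p.2 / φk (p.2 / h)) *
        Complex.exp (-Complex.I * p.2 * ((c - Real.log (p.1 ^ 2) / h : ℝ) : ℂ)))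
      (μ.prod volume) := by
    refine (integrable_prod_iff' hsm).mpr ⟨?_, ?_⟩
    · refine Filter.Eventually.of_forall fun s => ?_
      refine Integrable.mono' (integrable_const ‖φw s / φk (s / h)‖)
        (((hmeasE' s).const_mul (φw s / φk (s / h))).aestronglyMeasurable) ?_
      refine Filter.Eventually.of_forall fun b => ?_
      rw [norm_mul, norm_exp_neg_I_mul, mul_one]
    · have heq : (fun s : ℝ => ∫ b, ‖(φw s / φk (s / h)) *
          Complex.exp (-Complex.I * s * ((c - Real.log (b ^ 2) / h : ℝ) : ℂ))‖ ∂μ)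
          = fun s => ‖φw s / φk (s / h)‖ := by
        funext s
        have : ∀ b : ℝ, ‖(φw s / φk (s / h)) *
            Complex.exp (-Complex.I * s * ((c - Real.log (b ^ 2) / h : ℝ) : ℂ))‖ = ‖φw s / φk (s / h)‖ := by
          intro b
          rw [norm_mul, norm_exp_neg_I_mul, mul_one]
        rw [integral_congr_ae (Filter.Eventually.of_forall this), integral_const,
          probReal_univ, one_smul]
      rw [heq]
      exact hvh_int.norm
  -- Fubini
  have hswap := integral_integral_swap
    (f := fun b s => (φw s / φk (s / h)) *
      Complex.exp (-Complex.I * s * ((c - Real.log (b ^ 2) / h : ℝ) : ℂ))) hint_prod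
  -- the inner integral computation
  have hinner : ∀ s : ℝ,
      (∫ b, (φw s / φk (s / h)) * Complex.exp (-Complex.I * s * ((c - Real.log (b ^ 2) / h : ℝ) : ℂ)) ∂μ)
        = φw s * Complex.exp (-Complex.I * s * c) := by
    intro s
    have hsplit : ∀ b : ℝ,
        (φw s / φk (s / h)) * Complex.exp (-Complex.I * s * ((c - Real.log (b ^ 2) / h : ℝ) : ℂ))
          = ((φw s / φk (s / h)) * Complex.exp (-Complex.I * s * c)) *
            Complex.exp (Complex.I * ((s / h : ℝ) : ℂ) * (Real.log (b ^ 2) : ℂ)) := by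
      intro b
      have harg : (-Complex.I * s * ((c - Real.log (b ^ 2) / h : ℝ) : ℂ))
          = (-Complex.I * s * c) +
            (Complex.I * ((s / h : ℝ) : ℂ) * (Real.log (b ^ 2) : ℂ)) := by
        push_cast; ring
      rw [harg, Complex.exp_add]; ring
    rw [integral_congr_ae (Filter.Eventually.of_forall hsplit), integral_const_mul,
      ← hφk_char (s / h), mul_right_comm]
    rw [div_mul_cancel₀ _ (hφk_ne (s / h))]
  -- main computation
  apply Complex.ofReal_injective
  calc ((∫ b, vh (c - Real.log (b ^ 2) / h) ∂μ : ℝ) : ℂ)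
      = ∫ b, ((vh (c - Real.log (b ^ 2) / h) : ℝ) : ℂ) ∂μ := integral_ofReal.symm
    _ = ∫ b, (((1 / (2 * π) : ℝ) : ℂ) *
          ∫ s : ℝ, (φw s / φk (s / h)) * Complex.exp (-Complex.I * s *
            ((c - Real.log (b ^ 2) / h : ℝ) : ℂ))) ∂μ := by
        refine integral_congr_ae (Filter.Eventually.of_forall fun b => ?_)
        exact hvh _
    _ = ((1 / (2 * π) : ℝ) : ℂ) *
          ∫ b, (∫ s : ℝ, (φw s / φk (s / h)) * Complex.exp (-Complex.I * s *
            ((c - Real.log (b ^ 2) / h : ℝ) : ℂ))) ∂μ := integral_const_mul _ _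
    _ = ((1 / (2 * π) : ℝ) : ℂ) *
          ∫ s : ℝ, (∫ b, (φw s / φk (s / h)) * Complex.exp (-Complex.I * s *
            ((c - Real.log (b ^ 2) / h : ℝ) : ℂ)) ∂μ) := by rw [hswap]
    _ = ((1 / (2 * π) : ℝ) : ℂ) *
          ∫ s : ℝ, φw s * Complex.exp (-Complex.I * s * c) := by
        rw [integral_congr_ae (Filter.Eventually.of_forall hinner)]
    _ = ((w c : ℝ) : ℂ) := (hw c).symm

/-- If the volatility process `σ` is independent of the i.i.d. standard Gaussian noise `Z`,
`φ_k` is the characteristic function of `log Z_j²`, `v_h` is the deconvolution kernel built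
from `φ_w` and `φ_k`, and `w` is the inverse Fourier transform of `φ_w`, then
`E[v_h((x − log X_j²)/h) | F^σ] = w((x − log σ_j²)/h)` a.s., where `X_j = σ_j Z_j`. -/
theorem condexp_deconvolution_kernel
    {Ω : Type*} [MeasurableSpace Ω] (P : Measure Ω) [IsProbabilityMeasure P]
    (σp Z : ℕ → Ω → ℝ)
    (hσ_meas : ∀ j, Measurable (σp j)) (hZ_meas : ∀ j, Measurable (Z j))
    (hσ_pos : ∀ j ω, 0 < σp j ω)
    (hZ_iid : iIndepFun Z P)
    (hZ_gauss : ∀ j, Measure.map (Z j) P = gaussianReal 0 1)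
    (hindep : Indep (⨆ j, MeasurableSpace.comap (σp j) Real.measurableSpace)
                    (⨆ j, MeasurableSpace.comap (Z j) Real.measurableSpace) P)
    (φw φk : ℝ → ℂ) (w vh : ℝ → ℝ) (h : ℝ) (hh : 0 < h)
    (hφw_int : Integrable φw)
    (hφw_supp : ∀ s : ℝ, 1 < |s| → φw s = 0)
    (hφk : ∀ t : ℝ, φk t = ∫ ω, Complex.exp (Complex.I * t * Real.log ((Z 0 ω) ^ 2)) ∂P)
    (hφk_ne : ∀ t, φk t ≠ 0)
    (hvh_int : Integrable (fun s : ℝ => φw s / φk (s / h)))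
    (hvh : ∀ x : ℝ, (vh x : ℂ) =
      (1 / (2 * π) : ℝ) * ∫ s : ℝ, φw s / φk (s / h) * Complex.exp (-Complex.I * s * x))
    (hw : ∀ y : ℝ, (w y : ℂ) =
      (1 / (2 * π) : ℝ) * ∫ s : ℝ, φw s * Complex.exp (-Complex.I * s * y)) :
    ∀ (j : ℕ) (x : ℝ),
      P[(fun ω => vh ((x - Real.log ((σp j ω * Z j ω) ^ 2)) / h)) |
          (⨆ i, MeasurableSpace.comap (σp i) Real.measurableSpace)]
        =ᵐ[P] (fun ω => w ((x - Real.log ((σp j ω) ^ 2)) / h)) := by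
  intro j x
  -- the Gaussian measure
  set G : Measure ℝ := gaussianReal 0 1 with hGdef
  -- the characteristic function identity transported to `G`
  have hφk_G : ∀ t : ℝ, φk t = ∫ b, Complex.exp (Complex.I * t * Real.log (b ^ 2)) ∂G := by
    intro t
    have hmeas : AEStronglyMeasurable
        (fun b : ℝ => Complex.exp (Complex.I * t * Real.log (b ^ 2)))
        (Measure.map (Z 0) P) := by
      refine (Complex.measurable_exp.comp ?_).aestronglyMeasurable
      exact measurable_const.mul
        (Complex.measurable_ofReal.comp (Real.measurable_log.comp (measurable_id.pow_const 2)))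
    rw [hφk t, ← hZ_gauss 0]
    exact (integral_map (hZ_meas 0).aemeasurable hmeas).symm
  -- continuity of vh and w
  have hvh_cont : Continuous vh := continuous_of_fourier_repr vh _ hvh_int hvh
  have hw_cont : Continuous w := continuous_of_fourier_repr w _ hφw_int hw
  -- the process as a single map
  set X : Ω → (ℕ → ℝ) := fun ω i => σp i ω with hXdef
  have hX : Measurable X := measurable_pi_lambda _ hσ_meas
  have hm : MeasurableSpace.pi.comap X
      = ⨆ i, MeasurableSpace.comap (σp i) Real.measurableSpace := by
    have h1 : (MeasurableSpace.pi : MeasurableSpace (ℕ → ℝ))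
        = ⨆ i, Real.measurableSpace.comap fun b : ℕ → ℝ => b i := rfl
    rw [h1, MeasurableSpace.comap_iSup]
    refine iSup_congr fun i => ?_
    rw [MeasurableSpace.comap_comp]
    rfl
  -- independence of X and Z j
  have hXZ : IndepFun X (Z j) P := by
    show Indep (MeasurableSpace.pi.comap X) (Real.measurableSpace.comap (Z j)) P
    rw [hm]
    exact indep_of_indep_of_le_right hindep
      (le_iSup (fun i => MeasurableSpace.comap (Z i) Real.measurableSpace) j)
  haveI : IsProbabilityMeasure (P.map X) := Measure.isProbabilityMeasure_map hX.aemeasurable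
  -- the joint law is a product
  have hmap : P.map (fun ω => (X ω, Z j ω)) = (P.map X).prod G := by
    rw [← hZ_gauss j]
    exact (indepFun_iff_map_prod_eq_prod_map_map hX.aemeasurable
      (hZ_meas j).aemeasurable).mp hXZ
  -- identify the conditional distribution
  have hcomp : P.map (fun ω => (X ω, Z j ω))
      = (P.map X) ⊗ₘ (Kernel.const (ℕ → ℝ) G) := by
    rw [Measure.compProd_const]; exact hmap
  have hcd := condDistrib_ae_eq_of_measure_eq_compProd_of_measurable hX (hZ_meas j)
    (κ := Kernel.const (ℕ → ℝ) G) hcomp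
  have hae : ∀ᵐ ω ∂P, condDistrib (Z j) X P (X ω) = G := by
    filter_upwards [ae_of_ae_map hX.aemeasurable hcd] with ω hω
    rw [hω, Kernel.const_apply]
  -- the function of the pair
  set f : (ℕ → ℝ) × ℝ → ℝ := fun p => vh ((x - Real.log ((p.1 j * p.2) ^ 2)) / h) with hfdef
  have hf_meas_inner : Measurable fun p : (ℕ → ℝ) × ℝ =>
      (x - Real.log ((p.1 j * p.2) ^ 2)) / h := by
    refine Measurable.div_const (Measurable.const_sub ?_ x) h
    exact Real.measurable_log.comp
      ((((measurable_pi_apply j).comp measurable_fst).mul measurable_snd).pow_const 2)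
  have hf_sm : StronglyMeasurable f :=
    (hvh_cont.measurable.comp hf_meas_inner).stronglyMeasurable
  -- integrability of the composed function
  have hcomp_meas : Measurable fun ω => vh ((x - Real.log ((σp j ω * Z j ω) ^ 2)) / h) := by
    refine hvh_cont.measurable.comp ?_
    refine Measurable.div_const (Measurable.const_sub ?_ x) h
    exact Real.measurable_log.comp (((hσ_meas j).mul (hZ_meas j)).pow_const 2)
  have hf_int : Integrable (fun ω => f (X ω, Z j ω)) P := by
    refine Integrable.mono'
      (integrable_const ((1 / (2 * π)) * ∫ s : ℝ, ‖φw s / φk (s / h)‖))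
      hcomp_meas.aestronglyMeasurable ?_
    refine Filter.Eventually.of_forall fun ω => ?_
    rw [Real.norm_eq_abs]
    exact abs_le_of_fourier_repr vh _ hvh _
  -- the freezing lemma
  have hmain := condExp_prod_ae_eq_integral_condDistrib hX (hZ_meas j).aemeasurable hf_sm hf_int
  rw [← hm]
  refine hmain.trans ?_
  -- final pointwise computation
  filter_upwards [hae] with ω hω
  rw [hω]
  have ha : (0 : ℝ) < σp j ω := hσ_pos j ω
  -- a.e. nonzero under the Gaussian
  have hne : ∀ᵐ b ∂G, b ≠ 0 := by
    rw [ae_iff]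
    have hset : {b : ℝ | ¬ b ≠ 0} = {(0 : ℝ)} := by ext b; simp
    rw [hset]
    exact gaussianReal_absolutelyContinuous 0 one_ne_zero (by simp)
  have hcongr : ∫ b, f (X ω, b) ∂G
      = ∫ b, vh ((x - Real.log ((σp j ω) ^ 2)) / h - Real.log (b ^ 2) / h) ∂G := by
    refine integral_congr_ae ?_
    filter_upwards [hne] with b hb
    show vh ((x - Real.log ((σp j ω * b) ^ 2)) / h) = _
    congr 1
    rw [mul_pow, Real.log_mul (pow_ne_zero 2 ha.ne') (pow_ne_zero 2 hb)]
    ring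
  rw [hcongr]
  exact integral_vh_eq_w φw φk w vh h hφk_ne hvh_int hvh hw G hφk_G _
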